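/- Let q ≥ 2 be an integer and α, β ∈ ℂ with αβ = q and |α| = |β| = √q. Let n ≥ 30 be an integer and set w = (1 − α^n − β^n)/q^n. Then |Σ_{r=1}^{∞} C(1/2, r) w^r| < 0.0003 and |Σ_{r=2}^{∞} C(1/2, r) w^r| < 4.001/q^n, where C(1/2, r) = (1/2)(1/2 − 1)···(1/2 − r + 1)/r! denotes the generalized binomial coefficient (both series converge absolutely since |w| < 1). -/

import Mathlib

noncomputable def binomialHalf (r : ℕ) : ℂ :=
  (∏ i ∈ Finset.range r, ((1 : ℂ) / 2 - (i : ℂ))) / (r.factorial : ℂ)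

lemma binomialHalf_abs_le_one (m : ℕ) : ‖binomialHalf m‖ ≤ 1 := by
  unfold binomialHalf
  rw [norm_div, norm_prod]
  have hfac : (0:ℝ) < (m.factorial : ℝ) := by exact_mod_cast m.factorial_pos
  rw [Complex.norm_natCast, div_le_one hfac]
  calc (∏ i ∈ Finset.range m, ‖(1:ℂ)/2 - (i:ℂ)‖)
      ≤ ∏ i ∈ Finset.range m, ((i:ℝ)+1) := by
        apply Finset.prod_le_prod (fun i _ => norm_nonneg _)
        intro i _
        calc ‖(1:ℂ)/2 - (i:ℂ)‖
            ≤ ‖(1:ℂ)/2‖ + ‖(i:ℂ)‖ := by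
              simpa using norm_sub_le ((1:ℂ)/2) (i:ℂ)
          _ ≤ (i:ℝ)+1 := by
              rw [Complex.norm_natCast]
              have : ‖(1:ℂ)/2‖ = 1/2 := by
                rw [norm_div]; simp
              rw [this]; linarith
    _ = (m.factorial : ℝ) := by
        exact_mod_cast Finset.prod_range_add_one_eq_factorial m

lemma tail_bound (w : ℂ) (hA : ‖w‖ < 1) (k : ℕ) :
    Summable (fun r : ℕ => binomialHalf (r+k) * w^(r+k)) ∧
    ‖∑' r : ℕ, binomialHalf (r+k) * w^(r+k)‖
      ≤ ‖w‖ ^ k / (1 - ‖w‖) := by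
  set A := ‖w‖ with hAdef
  have hA0 : 0 ≤ A := norm_nonneg w
  have hg : Summable (fun r : ℕ => A ^ (r+k)) := by
    simpa [pow_add] using (summable_geometric_of_lt_one hA0 hA).mul_right (A^k)
  have hb : ∀ r : ℕ, ‖binomialHalf (r+k) * w^(r+k)‖ ≤ A^(r+k) := by
    intro r
    rw [norm_mul, norm_pow]
    calc ‖binomialHalf (r+k)‖ * A^(r+k)
        ≤ 1 * A^(r+k) :=
          mul_le_mul_of_nonneg_right (binomialHalf_abs_le_one _) (by positivity)
      _ = A^(r+k) := one_mul _
  have hnorm : Summable (fun r : ℕ => ‖binomialHalf (r+k) * w^(r+k)‖) :=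
    Summable.of_nonneg_of_le (fun _ => norm_nonneg _) hb hg
  have hsum : Summable (fun r : ℕ => binomialHalf (r+k) * w^(r+k)) :=
    hnorm.of_norm
  refine ⟨hsum, ?_⟩
  calc ‖∑' r : ℕ, binomialHalf (r+k) * w^(r+k)‖
      = ‖∑' r : ℕ, binomialHalf (r+k) * w^(r+k)‖ := rfl
    _ ≤ ∑' r : ℕ, ‖binomialHalf (r+k) * w^(r+k)‖ := norm_tsum_le_tsum_norm hnorm
    _ ≤ ∑' r : ℕ, A^(r+k) := Summable.tsum_le_tsum hb hnorm hg
    _ = A^k / (1-A) := by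
        simp_rw [pow_add]
        rw [tsum_mul_right, tsum_geometric_of_lt_one hA0 hA, inv_mul_eq_div]

theorem tail_sum_bounds
    (q : ℤ) (hq : 2 ≤ q)
    (α β : ℂ) (hprod : α * β = (q : ℂ))
    (hα : ‖α‖ = Real.sqrt q) (hβ : ‖β‖ = Real.sqrt q)
    (n : ℕ) (hn : 30 ≤ n) :
    Summable (fun r : ℕ =>
      binomialHalf (r + 1) * ((1 - α ^ n - β ^ n) / (q : ℂ) ^ n) ^ (r + 1)) ∧
    ‖∑' r : ℕ,
      binomialHalf (r + 1) * ((1 - α ^ n - β ^ n) / (q : ℂ) ^ n) ^ (r + 1)‖ < 0.0003 ∧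
    Summable (fun r : ℕ =>
      binomialHalf (r + 2) * ((1 - α ^ n - β ^ n) / (q : ℂ) ^ n) ^ (r + 2)) ∧
    ‖∑' r : ℕ,
      binomialHalf (r + 2) * ((1 - α ^ n - β ^ n) / (q : ℂ) ^ n) ^ (r + 2)‖
      < 4.001 / (q : ℝ) ^ n := by
  set Q : ℝ := (q : ℝ) with hQdef
  have hQ : (2:ℝ) ≤ Q := by rw [hQdef]; exact_mod_cast hq
  have hQ0 : (0:ℝ) < Q := by linarith
  set s : ℝ := Real.sqrt Q ^ n with hsdef
  have hsqrt : Real.sqrt Q ^ 2 = Q := Real.sq_sqrt hQ0.le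
  have h1sqrt : (1:ℝ) ≤ Real.sqrt Q := by
    nlinarith [Real.sqrt_nonneg Q]
  have hs2 : s ^ 2 = Q ^ n := by
    rw [hsdef, ← pow_mul, mul_comm, pow_mul, hsqrt]
  have hs_ge : (32768:ℝ) ≤ s := by
    calc (32768:ℝ) = 2 ^ 15 := by norm_num
      _ ≤ Q ^ 15 := pow_le_pow_left₀ (by norm_num) hQ 15
      _ = Real.sqrt Q ^ 30 := by rw [show (30:ℕ) = 2 * 15 by norm_num, pow_mul, hsqrt]
      _ ≤ s := pow_le_pow_right₀ h1sqrt hn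
  have hs0 : (0:ℝ) < s := by linarith
  set w : ℂ := (1 - α ^ n - β ^ n) / (q : ℂ) ^ n with hwdef
  set A : ℝ := ‖w‖ with hAdef
  have hA0 : 0 ≤ A := norm_nonneg w
  have habsq : ‖(q:ℂ)‖ = Q := by
    rw [show ((q:ℂ)) = ((Q:ℝ):ℂ) by rw [hQdef]; push_cast; ring, Complex.norm_real, Real.norm_eq_abs, abs_of_pos hQ0]
  have hnum : ‖1 - α ^ n - β ^ n‖ ≤ 1 + 2 * s := by
    calc ‖1 - α ^ n - β ^ n‖
        ≤ ‖1 - α ^ n‖ + ‖β ^ n‖ := by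
          simpa using norm_sub_le (1 - α ^ n) (β ^ n)
      _ ≤ (‖(1:ℂ)‖ + ‖α ^ n‖) + ‖β ^ n‖ := by
          have := norm_sub_le (1:ℂ) (α ^ n)
          linarith [this]
      _ = 1 + 2 * s := by
          rw [norm_one, norm_pow, norm_pow, hα, hβ]; push_cast [hQdef]; ring
  have hAle : A ≤ (1 + 2 * s) / s ^ 2 := by
    rw [hAdef, hwdef, norm_div, norm_pow, habsq, ← hs2]
    gcongr
  have hfrac : (1 + 2 * s) / s ^ 2 = 1 / s ^ 2 + 2 / s := by
    field_simp
  have h1s : 1 / s ^ 2 ≤ 1 / 32768 ^ 2 := by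
    apply one_div_le_one_div_of_le (by norm_num)
    nlinarith
  have h2s : 2 / s ≤ 2 / 32768 := by
    exact div_le_div_of_nonneg_left (by norm_num) (by norm_num) hs_ge
  have hAle' : A ≤ 1 / s ^ 2 + 2 / s := by rw [← hfrac]; exact hAle
  have hAsmall : A ≤ 1 / 8192 := by
    calc A ≤ 1 / 32768 ^ 2 + 2 / 32768 := by linarith
      _ ≤ 1 / 8192 := by norm_num
  have hA1 : A < 1 := lt_of_le_of_lt hAsmall (by norm_num)
  obtain ⟨hsum1, hb1⟩ := tail_bound w hA1 1
  obtain ⟨hsum2, hb2⟩ := tail_bound w hA1 2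
  refine ⟨hsum1, ?_, hsum2, ?_⟩
  · calc ‖∑' r : ℕ, binomialHalf (r + 1) * w ^ (r + 1)‖
        ≤ A ^ 1 / (1 - A) := hb1
      _ < 0.0003 := by
          rw [pow_one, div_lt_iff₀ (by linarith)]
          nlinarith
  · have hQn : (Q:ℝ) ^ n = s ^ 2 := hs2.symm
    calc ‖∑' r : ℕ, binomialHalf (r + 2) * w ^ (r + 2)‖
        ≤ A ^ 2 / (1 - A) := hb2
      _ < 4.001 / Q ^ n := by
          rw [hQn, div_lt_div_iff₀ (by linarith) (by positivity)]
          have hAs : A * s ≤ 2 + 1 / 32768 := by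
            calc A * s ≤ (1 / s ^ 2 + 2 / s) * s :=
                  mul_le_mul_of_nonneg_right hAle' hs0.le
              _ = 1 / s + 2 := by field_simp
              _ ≤ 1 / 32768 + 2 := by
                  have : 1 / s ≤ 1 / 32768 :=
                    one_div_le_one_div_of_le (by norm_num) hs_ge
                  linarith
              _ = 2 + 1 / 32768 := by ring
          have hAs2 : (A * s) ^ 2 ≤ (2 + 1 / 32768) ^ 2 :=
            pow_le_pow_left₀ (mul_nonneg hA0 hs0.le) hAs 2
          nlinarith [hAs2, hAsmall]
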